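/- Let v₁ = (0,0,0), v₂ = (1000,0,0), v₃ = (70,366,0), v₄ = (673,−413,−168), v₅ = (−49,−201,491), v₆ = (186,−235,−481), v₇ = (535,288,297), v₈ = (−159,−286,−137), v₉ = (831,−349,−17), v₁₀ = (210,−697,685) in ℝ³, and define edge vectors eᵢ = v_{i+1} − vᵢ for i = 1, …, 9 and e₁₀ = v₁ − v₁₀. Then there is no w ∈ ℝ³ such that (−1)^{i+1} (w · eᵢ) > 0 for every i ∈ {1, …, 10}. -/
import Mathlib

/-- The vertices of the paper's 10-stick polygonal realization of the knot `8_4`.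
Here `vert8_4 i` is the paper's vertex `v_(i+1)`. -/
noncomputable def vert8_4 : Fin 10 → (Fin 3 → ℝ) :=
  ![![0, 0, 0], ![1000, 0, 0], ![70, 366, 0], ![673, -413, -168], ![-49, -201, 491], ![186, -235, -481], ![535, 288, 297], ![-159, -286, -137], ![831, -349, -17], ![210, -697, 685]]

/-- The edge vectors `eᵢ = v_(i+1) − vᵢ` (cyclically, so `e₁₀ = v₁ − v₁₀`);
here `edge8_4 i` is the paper's `e_(i+1)`, using wrap-around addition on `Fin 10`. -/
noncomputable def edge8_4 (i : Fin 10) : Fin 3 → ℝ :=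
  vert8_4 (i + 1) - vert8_4 i

/-- There is no `w ∈ ℝ³` such that `(−1)^(i+1) (w · eᵢ) > 0` for every
`i ∈ {1, …, 10}`: no projection of this polygon (the knot `8_4`) to a line has
5 local maxima. (With 0-based indexing `i : Fin 10`, the sign is `(−1)^i`.) -/
theorem no_alternating_direction_8_4 :
    ¬ ∃ w : Fin 3 → ℝ, ∀ i : Fin 10,
        0 < (-1 : ℝ) ^ (i : ℕ) * ∑ j : Fin 3, w j * edge8_4 i j := by
  rintro ⟨w, hw⟩
  have h0 := hw 0
  have h1 := hw 1
  have h7 := hw 7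
  have h8 := hw 8
  have E0_0 : edge8_4 0 0 = (1000 : ℝ) := by
    have : edge8_4 0 0 = (1000 : ℝ) - 0 := rfl
    rw [this]; norm_num
  have E0_1 : edge8_4 0 1 = (0 : ℝ) := by
    have : edge8_4 0 1 = (0 : ℝ) - 0 := rfl
    rw [this]; norm_num
  have E0_2 : edge8_4 0 2 = (0 : ℝ) := by
    have : edge8_4 0 2 = (0 : ℝ) - 0 := rfl
    rw [this]; norm_num
  have E1_0 : edge8_4 1 0 = (-930 : ℝ) := by
    have : edge8_4 1 0 = (70 : ℝ) - 1000 := rfl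
    rw [this]; norm_num
  have E1_1 : edge8_4 1 1 = (366 : ℝ) := by
    have : edge8_4 1 1 = (366 : ℝ) - 0 := rfl
    rw [this]; norm_num
  have E1_2 : edge8_4 1 2 = (0 : ℝ) := by
    have : edge8_4 1 2 = (0 : ℝ) - 0 := rfl
    rw [this]; norm_num
  have E7_0 : edge8_4 7 0 = (990 : ℝ) := by
    have : edge8_4 7 0 = (831 : ℝ) - (-159) := rfl
    rw [this]; norm_num
  have E7_1 : edge8_4 7 1 = (-63 : ℝ) := by
    have : edge8_4 7 1 = ((-349) : ℝ) - (-286) := rfl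
    rw [this]; norm_num
  have E7_2 : edge8_4 7 2 = (120 : ℝ) := by
    have : edge8_4 7 2 = ((-17) : ℝ) - (-137) := rfl
    rw [this]; norm_num
  have E8_0 : edge8_4 8 0 = (-621 : ℝ) := by
    have : edge8_4 8 0 = (210 : ℝ) - 831 := rfl
    rw [this]; norm_num
  have E8_1 : edge8_4 8 1 = (-348 : ℝ) := by
    have : edge8_4 8 1 = ((-697) : ℝ) - (-349) := rfl
    rw [this]; norm_num
  have E8_2 : edge8_4 8 2 = (702 : ℝ) := by
    have : edge8_4 8 2 = (685 : ℝ) - (-17) := rfl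
    rw [this]; norm_num
  simp only [Fin.sum_univ_three, E0_0, E0_1, E0_2, E1_0, E1_1, E1_2,
    E7_0, E7_1, E7_2, E8_0, E8_1, E8_2,
    show ((0:Fin 10):ℕ) = 0 from rfl, show ((1:Fin 10):ℕ) = 1 from rfl,
    show ((7:Fin 10):ℕ) = 7 from rfl, show ((8:Fin 10):ℕ) = 8 from rfl] at h0 h1 h7 h8
  norm_num at h0 h1 h7 h8
  linarith [h0, h1, h7, h8]
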